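/- arXiv:2109.05264 — 6 statements merged into one kernel-verified Lean document; each statement's English description precedes it below -/
import Mathlib

section
/- Let A be a residuated binar whose underlying lattice is distributive. If A satisfies the identities (x ∨ y)/z = (x/z) ∨ (y/z) and (x ∧ y)\z = (x\z) ∨ (y\z), then A satisfies the identity x\(y ∨ z) = (x\y) ∨ (x\z). -/
/-- In a residuated binar with distributive lattice reduct,
identities (4) and (5) imply identity (3). -/
theorem stmt_0 {A : Type*} [Lattice A]
    (mul under over' : A → A → A)
    (hres : ∀ x y z : A, (mul x y ≤ z ↔ y ≤ under x z) ∧ (mul x y ≤ z ↔ x ≤ over' z y))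
    (hdist : ∀ x y z : A, x ⊓ (y ⊔ z) = (x ⊓ y) ⊔ (x ⊓ z))
    (h1 : ∀ x y z : A, over' (x ⊔ y) z = over' x z ⊔ over' y z)
    (h2 : ∀ x y z : A, under (x ⊓ y) z = under x z ⊔ under y z) :
    ∀ x y z : A, under x (y ⊔ z) = under x y ⊔ under x z := by
  -- basic residuation facts
  have mulu : ∀ a b : A, mul a (under a b) ≤ b := fun a b => (hres a (under a b) b).1.mpr le_rfl
  have mulo : ∀ a b : A, mul (over' b a) a ≤ b := fun a b => (hres (over' b a) a b).2.mpr le_rfl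
  have mul_mono_left : ∀ a b w : A, a ≤ b → mul a w ≤ mul b w := by
    intro a b w hab
    exact (hres a w (mul b w)).2.mpr (le_trans hab ((hres b w (mul b w)).2.mp le_rfl))
  have mul_mono_right : ∀ a w w' : A, w ≤ w' → mul a w ≤ mul a w' := by
    intro a w w' hww
    exact (hres a w (mul a w')).1.mpr (le_trans hww ((hres a w' (mul a w')).1.mp le_rfl))
  have under_mono : ∀ a b b' : A, b ≤ b' → under a b ≤ under a b' := by
    intro a b b' hbb
    exact (hres a (under a b) b').1.mp (le_trans (mulu a b) hbb)
  intro x y z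
  set u := under x (y ⊔ z) with hu
  set c := over' y u with hc
  set d := over' z u with hd
  -- x ≤ c ⊔ d
  have hxu : mul x u ≤ y ⊔ z := mulu x (y ⊔ z)
  have hx : x ≤ c ⊔ d := by
    have := (hres x u (y ⊔ z)).2.mp hxu
    rwa [h1 y z u] at this
  have hcu : mul c u ≤ y := mulo u y
  have hdu : mul d u ≤ z := mulo u z
  have hucy : u ≤ under c y := (hres c u y).1.mp hcu
  have hudz : u ≤ under d z := (hres d u z).1.mp hdu
  -- the key step: u ≤ under d y ⊔ under c z
  have hcdu : mul (c ⊓ d) u ≤ y ⊓ z :=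
    le_inf (le_trans (mul_mono_left _ _ _ inf_le_left) hcu)
      (le_trans (mul_mono_left _ _ _ inf_le_right) hdu)
  have hstar : u ≤ under d y ⊔ under c z := by
    have h3 : u ≤ under (c ⊓ d) (y ⊓ z) := (hres (c ⊓ d) u (y ⊓ z)).1.mp hcdu
    rw [h2 c d (y ⊓ z)] at h3
    refine le_trans h3 (sup_le ?_ ?_)
    · exact le_trans (under_mono c _ _ inf_le_right) le_sup_right
    · exact le_trans (under_mono d _ _ inf_le_left) le_sup_left
  -- distributivity step: u ≤ (c\y ⊓ d\y) ⊔ (c\z ⊓ d\z)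
  have hdistr : u ≤ (under c y ⊓ under d y) ⊔ (under c z ⊓ under d z) := by
    have h4 : u = (u ⊓ under d y) ⊔ (u ⊓ under c z) := by
      rw [← hdist]
      exact (inf_eq_left.mpr hstar).symm
    calc u = (u ⊓ under d y) ⊔ (u ⊓ under c z) := h4
      _ ≤ (under c y ⊓ under d y) ⊔ (under c z ⊓ under d z) :=
        sup_le_sup (le_inf (le_trans inf_le_left hucy) inf_le_right)
          (le_inf inf_le_right (le_trans inf_le_left hudz))
  -- (c\w ⊓ d\w) ≤ x\w
  have hmeet : ∀ w : A, under c w ⊓ under d w ≤ under x w := by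
    intro w
    have hcd : mul (c ⊔ d) (under c w ⊓ under d w) ≤ w := by
      refine (hres (c ⊔ d) _ w).2.mpr (sup_le ?_ ?_)
      · exact (hres c _ w).2.mp
          (le_trans (mul_mono_right c _ _ inf_le_left) (mulu c w))
      · exact (hres d _ w).2.mp
          (le_trans (mul_mono_right d _ _ inf_le_right) (mulu d w))
    exact (hres x _ w).1.mp (le_trans (mul_mono_left _ _ _ hx) hcd)
  -- hard direction
  have hard : u ≤ under x y ⊔ under x z :=
    le_trans hdistr (sup_le_sup (hmeet y) (hmeet z))
  -- easy direction
  have easy : under x y ⊔ under x z ≤ u :=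
    sup_le (under_mono x y _ le_sup_left) (under_mono x z _ le_sup_right)
  exact le_antisymm hard easy
end

section
/- Let A be a residuated binar whose underlying lattice is distributive. If A satisfies the identities x\(y ∨ z) = (x\y) ∨ (x\z) and x/(y ∧ z) = (x/y) ∨ (x/z), then A satisfies the identity (x ∨ y)/z = (x/z) ∨ (y/z). -/
/-- In a residuated binar with distributive lattice reduct,
identities (3) and (6) imply identity (4). -/
theorem stmt_1 {A : Type*} [Lattice A]
    (mul under ovr : A → A → A)
    (hres : ∀ x y z : A, (mul x y ≤ z ↔ y ≤ under x z) ∧ (mul x y ≤ z ↔ x ≤ ovr z y))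
    (hdist : ∀ x y z : A, x ⊓ (y ⊔ z) = (x ⊓ y) ⊔ (x ⊓ z))
    (h1 : ∀ x y z : A, under x (y ⊔ z) = under x y ⊔ under x z)
    (h2 : ∀ x y z : A, ovr x (y ⊓ z) = ovr x y ⊔ ovr x z) :
    ∀ x y z : A, ovr (x ⊔ y) z = ovr x z ⊔ ovr y z := by
  have hr1 : ∀ a b c : A, mul a b ≤ c ↔ b ≤ under a c := fun a b c => (hres a b c).1
  have hr2 : ∀ a b c : A, mul a b ≤ c ↔ a ≤ ovr c b := fun a b c => (hres a b c).2
  intro x y z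
  apply le_antisymm
  · set w := ovr (x ⊔ y) z with hw
    have hwz : mul w z ≤ x ⊔ y := (hr2 _ _ _).mpr le_rfl
    set u := under w x with hu
    set v := under w y with hv
    have hzuv : z ≤ u ⊔ v := by
      have := (hr1 w z (x ⊔ y)).mp hwz
      rwa [h1] at this
    have hwu : mul w u ≤ x := (hr1 _ _ _).mpr le_rfl
    have hwv : mul w v ≤ y := (hr1 _ _ _).mpr le_rfl
    -- key: w ≤ (x⊓y)/u ⊔ (x⊓y)/v  via (6)
    have hkey : w ≤ ovr (x ⊓ y) u ⊔ ovr (x ⊓ y) v := by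
      rw [← h2]
      refine (hr2 _ _ _).mp (le_inf ?_ ?_)
      · exact (hr1 _ _ _).mpr inf_le_left
      · exact (hr1 _ _ _).mpr inf_le_right
    -- (x⊓y)/s ≤ x/s ⊓ y/s
    have hnum : ∀ p q s : A, ovr (p ⊓ q) s ≤ ovr p s ⊓ ovr q s := by
      intro p q s
      have h := (hr2 (ovr (p ⊓ q) s) s (p ⊓ q)).mpr le_rfl
      exact le_inf ((hr2 _ _ _).mp (h.trans inf_le_left))
        ((hr2 _ _ _).mp (h.trans inf_le_right))
    have hwA : w ≤ ovr x u := (hr2 _ _ _).mp hwu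
    have hwD : w ≤ ovr y v := (hr2 _ _ _).mp hwv
    have hkey2 : w ≤ (ovr x u ⊓ ovr y u) ⊔ (ovr x v ⊓ ovr y v) :=
      hkey.trans (sup_le_sup (hnum x y u) (hnum x y v))
    -- p/u ⊓ p/v ≤ p/z  (since z ≤ u ⊔ v)
    have hmeet : ∀ p : A, ovr p u ⊓ ovr p v ≤ ovr p z := by
      intro p
      set t := ovr p u ⊓ ovr p v with ht
      refine (hr2 t z p).mp ((hr1 t z p).mpr (hzuv.trans (sup_le ?_ ?_)))
      · exact (hr1 t u p).mp ((hr2 t u p).mpr inf_le_left)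
      · exact (hr1 t v p).mp ((hr2 t v p).mpr inf_le_right)
    -- distribute:
    have hdec : w ≤ (ovr y u ⊓ ovr y v) ⊔ (ovr x u ⊓ ovr x v) := by
      have h0 : w = w ⊓ ((ovr x u ⊓ ovr y u) ⊔ (ovr x v ⊓ ovr y v)) :=
        (inf_eq_left.mpr hkey2).symm
      calc w = (w ⊓ (ovr x u ⊓ ovr y u)) ⊔ (w ⊓ (ovr x v ⊓ ovr y v)) := by
              rw [← hdist]; exact h0
        _ ≤ (ovr y u ⊓ ovr y v) ⊔ (ovr x u ⊓ ovr x v) := by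
              apply sup_le_sup
              · exact le_inf (inf_le_right.trans inf_le_right) (inf_le_left.trans hwD)
              · exact le_inf (inf_le_left.trans hwA) (inf_le_right.trans inf_le_left)
    calc w ≤ (ovr y u ⊓ ovr y v) ⊔ (ovr x u ⊓ ovr x v) := hdec
      _ ≤ ovr y z ⊔ ovr x z := sup_le_sup (hmeet y) (hmeet x)
      _ = ovr x z ⊔ ovr y z := sup_comm _ _
  · apply sup_le
    · exact (hr2 _ _ _).mp (((hr2 _ _ _).mpr le_rfl).trans le_sup_left)
    · exact (hr2 _ _ _).mp (((hr2 _ _ _).mpr le_rfl).trans le_sup_right)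
end

section
/- Let A be a residuated binar whose underlying lattice is distributive. If A satisfies the identities x·(y ∧ z) = (x·y) ∧ (x·z) and (x ∨ y)/z = (x/z) ∨ (y/z), then A satisfies the identity x/(y ∧ z) = (x/y) ∨ (x/z). -/
/-- In a residuated binar with distributive lattice reduct,
identities (1) and (4) imply identity (6). -/
theorem stmt_2 {A : Type*} [Lattice A]
    (mul under over' : A → A → A)
    (hres : ∀ x y z : A, (mul x y ≤ z ↔ y ≤ under x z) ∧ (mul x y ≤ z ↔ x ≤ over' z y))
    (hdist : ∀ x y z : A, x ⊓ (y ⊔ z) = (x ⊓ y) ⊔ (x ⊓ z))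
    (h1 : ∀ x y z : A, mul x (y ⊓ z) = mul x y ⊓ mul x z)
    (h2 : ∀ x y z : A, over' (x ⊔ y) z = over' x z ⊔ over' y z) :
    ∀ x y z : A, over' x (y ⊓ z) = over' x y ⊔ over' x z := by
  have adj : ∀ x y z : A, mul x y ≤ z ↔ x ≤ over' z y := fun x y z => (hres x y z).2
  have adjU : ∀ x y z : A, mul x y ≤ z ↔ y ≤ under x z := fun x y z => (hres x y z).1
  -- counit : mul (over z y) y ≤ z
  have counit : ∀ y z : A, mul (over' z y) y ≤ z := fun y z => (adj _ _ _).mpr le_rfl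
  -- mul monotone in each argument
  have mulmono2 : ∀ x : A, ∀ {y y' : A}, y ≤ y' → mul x y ≤ mul x y' := fun x {y y'} h =>
    (adjU _ _ _).mpr (h.trans ((adjU x y' (mul x y')).mp le_rfl))
  have mulmono1 : ∀ {u v : A} (y : A), u ≤ v → mul u y ≤ mul v y := fun {u v} y h =>
    (adj u y (mul v y)).mpr (h.trans ((adj v y (mul v y)).mp le_rfl))
  -- mul subdistributes over joins in second argument
  have muljoin2 : ∀ x y z : A, mul x (y ⊔ z) ≤ mul x y ⊔ mul x z := fun x y z =>
    (adjU _ _ _).mpr (sup_le ((adjU _ _ _).mp le_sup_left) ((adjU _ _ _).mp le_sup_right))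
  -- over antitone in second argument
  have overanti2 : ∀ {y y' : A} (z : A), y ≤ y' → over' z y' ≤ over' z y := fun {y y'} z h =>
    (adj _ _ _).mp ((mulmono2 _ h).trans (counit y' z))
  intro x y z
  set t := over' x (y ⊓ z) with ht
  apply le_antisymm
  · -- hard direction : t ≤ over' x y ⊔ over' x z
    have htx : mul t y ⊓ mul t z ≤ x := by
      rw [← h1]; exact counit _ _
    set s₁ := over' (mul t z) y with hs₁
    set s₂ := over' (mul t y) z with hs₂
    -- Lemma L : t ≤ s₁ ⊔ s₂
    have hL : t ≤ s₁ ⊔ s₂ := by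
      have h0 : t ≤ over' (mul t y ⊔ mul t z) (y ⊔ z) :=
        (adj _ _ _).mp (muljoin2 t y z)
      have h0' : t ≤ over' (mul t y) (y ⊔ z) ⊔ over' (mul t z) (y ⊔ z) := by
        rw [← h2]; exact h0
      exact h0'.trans (sup_le ((overanti2 _ le_sup_right).trans le_sup_right)
        ((overanti2 _ le_sup_left).trans le_sup_left))
    have key1 : t ⊓ s₁ ≤ over' x y := by
      refine (adj _ _ _).mp (le_trans (le_inf ?_ ?_) htx)
      · exact mulmono1 y inf_le_left
      · exact (mulmono1 y inf_le_right).trans (counit _ _)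
    have key2 : t ⊓ s₂ ≤ over' x z := by
      refine (adj _ _ _).mp (le_trans (le_inf ?_ ?_) htx)
      · exact (mulmono1 z inf_le_right).trans (counit _ _)
      · exact mulmono1 z inf_le_left
    calc t = t ⊓ (s₁ ⊔ s₂) := (inf_eq_left.mpr hL).symm
    _ = (t ⊓ s₁) ⊔ (t ⊓ s₂) := hdist t s₁ s₂
    _ ≤ over' x y ⊔ over' x z := sup_le (key1.trans le_sup_left) (key2.trans le_sup_right)
  · -- easy direction
    exact sup_le (overanti2 x inf_le_left) (overanti2 x inf_le_right)
end

section
/- Let A be a residuated binar whose underlying lattice is distributive. If A satisfies the identities (x ∧ y)\z = (x\z) ∨ (y\z) and x·(y ∧ z) = (x·y) ∧ (x·z), then A satisfies the identity (x ∧ y)·z = (x·z) ∧ (y·z). -/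
/-- In a residuated binar with distributive lattice reduct,
identities (5) and (1) imply identity (2). -/
theorem stmt_4 {A : Type*} [Lattice A]
    (mul under over' : A → A → A)
    (hres : ∀ x y z : A, (mul x y ≤ z ↔ y ≤ under x z) ∧ (mul x y ≤ z ↔ x ≤ over' z y))
    (hdist : ∀ x y z : A, x ⊓ (y ⊔ z) = (x ⊓ y) ⊔ (x ⊓ z))
    (h1 : ∀ x y z : A, under (x ⊓ y) z = under x z ⊔ under y z)
    (h2 : ∀ x y z : A, mul x (y ⊓ z) = mul x y ⊓ mul x z) :
    ∀ x y z : A, mul (x ⊓ y) z = mul x z ⊓ mul y z := by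
  have hu : ∀ x y z : A, mul x y ≤ z ↔ y ≤ under x z := fun x y z => (hres x y z).1
  have ho : ∀ x y z : A, mul x y ≤ z ↔ x ≤ over' z y := fun x y z => (hres x y z).2
  -- monotonicity in the first argument
  have mono1 : ∀ u v t : A, u ≤ v → mul u t ≤ mul v t := by
    intro u v t h
    exact (ho u t (mul v t)).mpr (le_trans h ((ho v t (mul v t)).mp le_rfl))
  -- monotonicity in the second argument
  have mono2 : ∀ t u v : A, u ≤ v → mul t u ≤ mul t v := by
    intro t u v h
    exact (hu t u (mul t v)).mpr (le_trans h ((hu t v (mul t v)).mp le_rfl))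
  -- join subdistribution in the first argument
  have supmul : ∀ u v t : A, mul (u ⊔ v) t ≤ mul u t ⊔ mul v t := by
    intro u v t
    refine (ho _ _ _).mpr (sup_le ?_ ?_)
    · exact (ho u t _).mp le_sup_left
    · exact (ho v t _).mp le_sup_right
  -- join subdistribution in the second argument
  have mulsup : ∀ t u v : A, mul t (u ⊔ v) ≤ mul t u ⊔ mul t v := by
    intro t u v
    refine (hu _ _ _).mpr (sup_le ?_ ?_)
    · exact (hu t u _).mp le_sup_left
    · exact (hu t v _).mp le_sup_right
  intro x y z
  set w := mul (x ⊓ y) z with hw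
  -- the easy direction
  have easy : mul (x ⊓ y) z ≤ mul x z ⊓ mul y z :=
    le_inf (mono1 _ _ _ inf_le_left) (mono1 _ _ _ inf_le_right)
  -- abbreviations
  set a := under x w with ha
  set b := under y w with hb
  have hxa : mul x a ≤ w := (hu x a w).mpr le_rfl
  have hyb : mul y b ≤ w := (hu y b w).mpr le_rfl
  -- z is below a ⊔ b by (5)
  have hz : z ≤ a ⊔ b := by
    have h0 : z ≤ under (x ⊓ y) w := (hu _ _ _).mp le_rfl
    rwa [h1 x y w] at h0
  -- split z as (z ⊓ a) ⊔ (z ⊓ b)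
  have hzz : z = (z ⊓ a) ⊔ (z ⊓ b) := by
    rw [← hdist]
    exact (inf_eq_left.mpr hz).symm
  have hxp : mul x (z ⊓ a) ≤ w := le_trans (mono2 _ _ _ inf_le_right) hxa
  have hyq : mul y (z ⊓ b) ≤ w := le_trans (mono2 _ _ _ inf_le_right) hyb
  have hx1 : mul x z ≤ w ⊔ mul x (z ⊓ b) := by
    calc mul x z = mul x ((z ⊓ a) ⊔ (z ⊓ b)) := by rw [← hzz]
      _ ≤ mul x (z ⊓ a) ⊔ mul x (z ⊓ b) := mulsup _ _ _
      _ ≤ w ⊔ mul x (z ⊓ b) := sup_le_sup_right hxp _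
  have hy1 : mul y z ≤ w ⊔ mul y (z ⊓ a) := by
    calc mul y z = mul y ((z ⊓ a) ⊔ (z ⊓ b)) := by rw [← hzz]
      _ ≤ mul y (z ⊓ a) ⊔ mul y (z ⊓ b) := mulsup _ _ _
      _ ≤ mul y (z ⊓ a) ⊔ w := sup_le_sup_left hyq _
      _ = w ⊔ mul y (z ⊓ a) := sup_comm _ _
  -- the cross term, via the left factor x ⊔ y and (1)
  have hC : mul x (z ⊓ b) ⊓ mul y (z ⊓ a) ≤ w := by
    have c1 : mul x (z ⊓ b) ≤ mul (x ⊔ y) (z ⊓ b) := mono1 _ _ _ le_sup_left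
    have c2 : mul y (z ⊓ a) ≤ mul (x ⊔ y) (z ⊓ a) := mono1 _ _ _ le_sup_right
    have c3 : mul x (z ⊓ b) ⊓ mul y (z ⊓ a)
        ≤ mul (x ⊔ y) ((z ⊓ b) ⊓ (z ⊓ a)) :=
      le_trans (inf_le_inf c1 c2) (le_of_eq (h2 (x ⊔ y) (z ⊓ b) (z ⊓ a)).symm)
    have c4 : (z ⊓ b) ⊓ (z ⊓ a) ≤ a ⊓ b :=
      le_inf (le_trans inf_le_right inf_le_right) (le_trans inf_le_left inf_le_right)
    have c5 : mul (x ⊔ y) ((z ⊓ b) ⊓ (z ⊓ a)) ≤ mul (x ⊔ y) (a ⊓ b) := mono2 _ _ _ c4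
    have c6 : mul (x ⊔ y) (a ⊓ b) ≤ mul x (a ⊓ b) ⊔ mul y (a ⊓ b) := supmul _ _ _
    have c7 : mul x (a ⊓ b) ⊔ mul y (a ⊓ b) ≤ w :=
      sup_le (le_trans (mono2 _ _ _ inf_le_left) hxa)
        (le_trans (mono2 _ _ _ inf_le_right) hyb)
    exact le_trans c3 (le_trans c5 (le_trans c6 c7))
  -- distributive lattice fact: (w ⊔ s) ⊓ (w ⊔ t) ≤ w ⊔ (s ⊓ t)
  have key : ∀ s t : A, (w ⊔ s) ⊓ (w ⊔ t) ≤ w ⊔ (s ⊓ t) := by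
    intro s t
    calc (w ⊔ s) ⊓ (w ⊔ t) = ((w ⊔ s) ⊓ w) ⊔ ((w ⊔ s) ⊓ t) := hdist _ _ _
      _ ≤ w ⊔ ((w ⊔ s) ⊓ t) := sup_le_sup_right inf_le_right _
      _ = w ⊔ ((t ⊓ w) ⊔ (t ⊓ s)) := by rw [inf_comm (w ⊔ s) t, hdist]
      _ ≤ w ⊔ (s ⊓ t) :=
        sup_le le_sup_left
          (sup_le (le_trans inf_le_right le_sup_left)
            (le_trans (le_of_eq (inf_comm t s)) le_sup_right))
  -- put everything together
  have hard : mul x z ⊓ mul y z ≤ w := by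
    have h3 : mul x z ⊓ mul y z
        ≤ (w ⊔ mul x (z ⊓ b)) ⊓ (w ⊔ mul y (z ⊓ a)) := inf_le_inf hx1 hy1
    exact le_trans h3 (le_trans (key _ _) (sup_le le_rfl hC))
  exact le_antisymm easy hard
end

section
/- Let A be a residuated binar whose underlying lattice is distributive. If A satisfies the identities x/(y ∧ z) = (x/y) ∨ (x/z) and (x ∧ y)·z = (x·z) ∧ (y·z), then A satisfies the identity x·(y ∧ z) = (x·y) ∧ (x·z). -/
/-- In a residuated binar with distributive lattice reduct,
identities (6) and (2) imply identity (1). -/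
theorem stmt_5 {A : Type*} [Lattice A]
    (mul under ovr : A → A → A)
    (hres : ∀ x y z : A, (mul x y ≤ z ↔ y ≤ under x z) ∧ (mul x y ≤ z ↔ x ≤ ovr z y))
    (hdist : ∀ x y z : A, x ⊓ (y ⊔ z) = (x ⊓ y) ⊔ (x ⊓ z))
    (h1 : ∀ x y z : A, ovr x (y ⊓ z) = ovr x y ⊔ ovr x z)
    (h2 : ∀ x y z : A, mul (x ⊓ y) z = mul x z ⊓ mul y z) :
    ∀ x y z : A, mul x (y ⊓ z) = mul x y ⊓ mul x z := by
  intro x y z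
  have mono1 : ∀ a b c : A, a ≤ b → mul a c ≤ mul b c := by
    intro a b c hab
    exact ((hres a c (mul b c)).2).mpr (hab.trans (((hres b c (mul b c)).2).mp le_rfl))
  have mono2 : ∀ a b c : A, b ≤ c → mul a b ≤ mul a c := by
    intro a b c hbc
    exact ((hres a b (mul a c)).1).mpr (hbc.trans (((hres a c (mul a c)).1).mp le_rfl))
  set w := mul x (y ⊓ z) with hw
  refine le_antisymm (le_inf (mono2 _ _ _ inf_le_left) (mono2 _ _ _ inf_le_right)) ?_
  set p := ovr w y with hp
  set q := ovr w z with hq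
  have hx : x ≤ p ⊔ q := by
    have hxo : x ≤ ovr w (y ⊓ z) := ((hres x (y ⊓ z) w).2).mp le_rfl
    rwa [h1] at hxo
  set u := x ⊓ q with hu
  set v := x ⊓ p with hv
  have hxvu : x ≤ v ⊔ u := by
    rw [hv, hu, ← hdist]
    exact le_inf le_rfl hx
  have hvy : mul v y ≤ w := ((hres v y w).2).mpr inf_le_right
  have huz : mul u z ≤ w := ((hres u z w).2).mpr inf_le_right
  have huvy : mul (u ⊓ v) y ≤ w :=
    ((hres _ y w).2).mpr (le_trans inf_le_right inf_le_right)
  have huvz : mul (u ⊓ v) z ≤ w :=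
    ((hres _ z w).2).mpr (le_trans inf_le_left inf_le_right)
  have hbad : mul u y ⊓ mul v z ≤ w := by
    have h3 : mul u y ⊓ mul v z ≤ mul (u ⊓ v) (y ⊔ z) := by
      rw [h2 u v (y ⊔ z)]
      exact inf_le_inf (mono2 _ _ _ le_sup_left) (mono2 _ _ _ le_sup_right)
    refine h3.trans ?_
    exact ((hres _ _ w).1).mpr (sup_le (((hres _ y w).1).mp huvy) (((hres _ z w).1).mp huvz))
  have hxy : mul x y ≤ w ⊔ mul u y := by
    have hvu : mul (v ⊔ u) y ≤ w ⊔ mul u y := by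
      refine ((hres _ y _).2).mpr (sup_le ?_ ?_)
      · exact ((hres v y _).2).mp (hvy.trans le_sup_left)
      · exact ((hres u y _).2).mp le_sup_right
    exact (mono1 _ _ _ hxvu).trans hvu
  have hxz : mul x z ≤ w ⊔ mul v z := by
    have hvu : mul (v ⊔ u) z ≤ w ⊔ mul v z := by
      refine ((hres _ z _).2).mpr (sup_le ?_ ?_)
      · exact ((hres v z _).2).mp le_sup_right
      · exact ((hres u z _).2).mp (huz.trans le_sup_left)
    exact (mono1 _ _ _ hxvu).trans hvu
  calc mul x y ⊓ mul x z ≤ (w ⊔ mul u y) ⊓ (w ⊔ mul v z) := inf_le_inf hxy hxz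
  _ = ((w ⊔ mul u y) ⊓ w) ⊔ ((w ⊔ mul u y) ⊓ mul v z) := hdist _ _ _
  _ ≤ w ⊔ ((w ⊔ mul u y) ⊓ mul v z) := sup_le_sup_right inf_le_right _
  _ = w ⊔ ((mul v z ⊓ w) ⊔ (mul v z ⊓ mul u y)) := by
      rw [inf_comm (w ⊔ mul u y) (mul v z), hdist]
  _ ≤ w := by
      refine sup_le le_rfl (sup_le inf_le_right ?_)
      rw [inf_comm]
      exact hbad
end

section
/- There exists a finite residuated binar A that satisfies the five distributivity identities x·(y ∧ z) = (x·y) ∧ (x·z), (x ∧ y)·z = (x·z) ∧ (y·z), (x ∨ y)/z = (x/z) ∨ (y/z), (x ∧ y)\z = (x\z) ∨ (y\z) and x/(y ∧ z) = (x/y) ∨ (x/z), but does not satisfy the identity x\(y ∨ z) = (x\y) ∨ (x\z). Consequently, the identity x\(y ∨ z) = (x\y) ∨ (x\z) does not follow from any combination of the other five identities in residuated binars. -/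
private def leB : Fin 7 → Fin 7 → Bool :=
  ![![true, true, true, true, true, true, true],
    ![false, true, false, true, true, true, true],
    ![false, false, true, true, true, false, true],
    ![false, false, false, true, true, false, true],
    ![false, false, false, false, true, false, true],
    ![false, false, false, false, false, true, true],
    ![false, false, false, false, false, false, true]]

private def infT : Fin 7 → Fin 7 → Fin 7 :=
  ![![0, 0, 0, 0, 0, 0, 0],
    ![0, 1, 0, 1, 1, 1, 1],
    ![0, 0, 2, 2, 2, 0, 2],
    ![0, 1, 2, 3, 3, 1, 3],
    ![0, 1, 2, 3, 4, 1, 4],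
    ![0, 1, 0, 1, 1, 5, 5],
    ![0, 1, 2, 3, 4, 5, 6]]

private def supT : Fin 7 → Fin 7 → Fin 7 :=
  ![![0, 1, 2, 3, 4, 5, 6],
    ![1, 1, 3, 3, 4, 5, 6],
    ![2, 3, 2, 3, 4, 6, 6],
    ![3, 3, 3, 3, 4, 6, 6],
    ![4, 4, 4, 4, 4, 6, 6],
    ![5, 5, 6, 6, 6, 5, 6],
    ![6, 6, 6, 6, 6, 6, 6]]

private def mulT : Fin 7 → Fin 7 → Fin 7 :=
  ![![0, 0, 0, 0, 0, 0, 0],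
    ![0, 0, 0, 0, 0, 0, 0],
    ![0, 0, 2, 2, 2, 0, 2],
    ![0, 0, 2, 2, 2, 0, 2],
    ![0, 0, 2, 2, 2, 0, 2],
    ![0, 1, 0, 1, 1, 5, 5],
    ![0, 1, 2, 3, 3, 5, 6]]

private def underT : Fin 7 → Fin 7 → Fin 7 :=
  ![![6, 6, 6, 6, 6, 6, 6],
    ![6, 6, 6, 6, 6, 6, 6],
    ![5, 5, 6, 6, 6, 5, 6],
    ![5, 5, 6, 6, 6, 5, 6],
    ![5, 5, 6, 6, 6, 5, 6],
    ![2, 4, 2, 4, 4, 6, 6],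
    ![0, 1, 2, 4, 4, 5, 6]]

private def overT : Fin 7 → Fin 7 → Fin 7 :=
  ![![6, 4, 5, 1, 1, 4, 1],
    ![6, 6, 5, 5, 5, 4, 1],
    ![6, 4, 6, 4, 4, 4, 4],
    ![6, 6, 6, 6, 6, 4, 4],
    ![6, 6, 6, 6, 6, 4, 4],
    ![6, 6, 5, 5, 5, 6, 5],
    ![6, 6, 6, 6, 6, 6, 6]]

private def B7 : Type := Fin 7

private instance : Fintype B7 := inferInstanceAs (Fintype (Fin 7))
private instance : DecidableEq B7 := inferInstanceAs (DecidableEq (Fin 7))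

private theorem h_refl : ∀ a : Fin 7, leB a a = true := by decide
private theorem h_trans : ∀ a b c : Fin 7, leB a b = true → leB b c = true → leB a c = true := by
  decide
private theorem h_antisymm : ∀ a b : Fin 7, leB a b = true → leB b a = true → a = b := by decide
private theorem h_sup_left : ∀ a b : Fin 7, leB a (supT a b) = true := by decide
private theorem h_sup_right : ∀ a b : Fin 7, leB b (supT a b) = true := by decide
private theorem h_sup_le : ∀ a b c : Fin 7, leB a c = true → leB b c = true →
    leB (supT a b) c = true := by decide
private theorem h_inf_left : ∀ a b : Fin 7, leB (infT a b) a = true := by decide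
private theorem h_inf_right : ∀ a b : Fin 7, leB (infT a b) b = true := by decide
private theorem h_le_inf : ∀ a b c : Fin 7, leB a b = true → leB a c = true →
    leB a (infT b c) = true := by decide

private instance B7lattice : Lattice B7 where
  le a b := leB a b = true
  le_refl := h_refl
  le_trans := h_trans
  le_antisymm := h_antisymm
  sup := supT
  le_sup_left := h_sup_left
  le_sup_right := h_sup_right
  sup_le := h_sup_le
  inf := infT
  inf_le_left := h_inf_left
  inf_le_right := h_inf_right
  le_inf := h_le_inf

private theorem h_resid : ∀ x y z : Fin 7,
    ((leB (mulT x y) z = true) ↔ (leB y (underT x z) = true)) ∧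
    ((leB (mulT x y) z = true) ↔ (leB x (overT z y) = true)) := by decide
private theorem h_id1 : ∀ x y z : Fin 7, mulT x (infT y z) = infT (mulT x y) (mulT x z) := by
  decide
private theorem h_id2 : ∀ x y z : Fin 7, mulT (infT x y) z = infT (mulT x z) (mulT y z) := by
  decide
private theorem h_id4 : ∀ x y z : Fin 7, overT (supT x y) z = supT (overT x z) (overT y z) := by
  decide
private theorem h_id5 : ∀ x y z : Fin 7, underT (infT x y) z = supT (underT x z) (underT y z) := by
  decide
private theorem h_id6 : ∀ x y z : Fin 7, overT x (infT y z) = supT (overT x y) (overT x z) := by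
  decide
private theorem h_id3 :
    ¬ ∀ x y z : Fin 7, underT x (supT y z) = supT (underT x y) (underT x z) := by decide

/-- There is a finite residuated binar satisfying identities
(1), (2), (4), (5), (6) but not identity (3). -/
theorem stmt_8 :
    ∃ (A : Type) (_ : Fintype A) (_ : Lattice A) (mul under ovr : A → A → A),
      (∀ x y z : A, (mul x y ≤ z ↔ y ≤ under x z) ∧ (mul x y ≤ z ↔ x ≤ ovr z y)) ∧
      (∀ x y z : A, mul x (y ⊓ z) = mul x y ⊓ mul x z) ∧
      (∀ x y z : A, mul (x ⊓ y) z = mul x z ⊓ mul y z) ∧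
      (∀ x y z : A, ovr (x ⊔ y) z = ovr x z ⊔ ovr y z) ∧
      (∀ x y z : A, under (x ⊓ y) z = under x z ⊔ under y z) ∧
      (∀ x y z : A, ovr x (y ⊓ z) = ovr x y ⊔ ovr x z) ∧
      ¬ (∀ x y z : A, under x (y ⊔ z) = under x y ⊔ under x z) := by
  exact ⟨B7, inferInstance, inferInstance, mulT, underT, overT,
    h_resid, h_id1, h_id2, h_id4, h_id5, h_id6, h_id3⟩
end
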